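/- Fix η > 0 and t ∈ [0,1). For all g₁, g₂ ∈ 𝓛_η, ∫_ℝ |A₂(g₁)(x) − A₂(g₂)(x)| dx ≤ ((3η + 1)/(1 − t))·∫_ℝ |g₁(x) − g₂(x)| dx; in particular A₂ is Lipschitz on 𝓛_η with respect to the L¹ norm with a constant depending only on η and t. -/

import Mathlib

open MeasureTheory Set
open scoped Convolution
set_option maxHeartbeats 1000000

/-- The class `𝓛_η`: measurable functions `g : ℝ → [0,1]` vanishing outside `[0, η]`
with `∫₀^η g ≤ 1` and `∫₀^η x·g(x) dx ≤ 1`. -/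
def memLeta (η : ℝ) (g : ℝ → ℝ) : Prop :=
  Measurable g ∧ (∀ x, 0 ≤ g x ∧ g x ≤ 1) ∧
  (∀ x, x ∉ Set.Icc (0 : ℝ) η → g x = 0) ∧
  (∫ x in (0 : ℝ)..η, g x) ≤ 1 ∧ (∫ x in (0 : ℝ)..η, x * g x) ≤ 1

/-- The operator `A₂` from the metric-matching PDE (at time `t`). -/
noncomputable def A2op (t : ℝ) (g : ℝ → ℝ) (x : ℝ) : ℝ :=
  if x < 0 then 0
  else
    -(x + 1 / (1 - t)) * g x
      + (1 / (1 - t)) * ∫ x' in (0 : ℝ)..x, x' * g x' * g (x - x')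

lemma memLeta.integrable {η : ℝ} {g : ℝ → ℝ} (hg : memLeta η g) : Integrable g := by
  refine Integrable.mono' (g := (Icc (0:ℝ) η).indicator fun _ => (1:ℝ))
    ((integrable_indicator_iff measurableSet_Icc).2
      (integrableOn_const measure_Icc_lt_top.ne))
    hg.1.aestronglyMeasurable (ae_of_all _ fun x => ?_)
  rw [Real.norm_eq_abs, abs_of_nonneg (hg.2.1 x).1]
  by_cases hx : x ∈ Icc (0:ℝ) η
  · rw [indicator_of_mem hx]; exact (hg.2.1 x).2
  · rw [indicator_of_notMem hx, hg.2.2.1 x hx]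

lemma memLeta.integral_le_one {η : ℝ} (hη : 0 ≤ η) {g : ℝ → ℝ} (hg : memLeta η g) :
    ∫ x, g x ≤ 1 := by
  have : ∫ x, g x = ∫ x in (0:ℝ)..η, g x := by
    rw [intervalIntegral.integral_of_le hη, ← integral_Icc_eq_integral_Ioc]
    exact (setIntegral_eq_integral_of_forall_compl_eq_zero fun x hx => hg.2.2.1 x hx).symm
  rw [this]; exact hg.2.2.2.1

lemma intervalIntegrable_of_bounded {f : ℝ → ℝ} (hf : Measurable f) {C a b : ℝ}
    (hb : ∀ y, |f y| ≤ C) : IntervalIntegrable f volume a b := by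
  rw [intervalIntegrable_iff]
  refine Integrable.mono' (g := fun _ => C)
    (integrableOn_const measure_Ioc_lt_top.ne)
    hf.aestronglyMeasurable.restrict (ae_of_all _ fun y => ?_)
  rw [Real.norm_eq_abs]; exact hb y

lemma memLeta.intervalIntegrable_conv {η : ℝ} (hη : 0 ≤ η) {g : ℝ → ℝ} (hg : memLeta η g)
    (x a b : ℝ) :
    IntervalIntegrable (fun x' => x' * g x' * g (x - x')) volume a b := by
  have hm : Measurable fun x' => x' * g x' * g (x - x') :=
    (measurable_id.mul hg.1).mul (hg.1.comp (measurable_const.sub measurable_id))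
  refine intervalIntegrable_of_bounded hm (C := η) (fun y => ?_)
  by_cases hy : y ∈ Icc (0:ℝ) η
  · rw [abs_of_nonneg (mul_nonneg (mul_nonneg hy.1 (hg.2.1 y).1) (hg.2.1 (x - y)).1)]
    calc y * g y * g (x - y) ≤ y * g y :=
          mul_le_of_le_one_right (mul_nonneg hy.1 (hg.2.1 y).1) (hg.2.1 (x - y)).2
      _ ≤ y := mul_le_of_le_one_right hy.1 (hg.2.1 y).2
      _ ≤ η := hy.2
  · rw [hg.2.2.1 y hy]; simpa using hη


/-- `A₂` is Lipschitz on `𝓛_η` for the `L¹` norm with constant `(3η+1)/(1−t)`. -/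
theorem stmt12 (η : ℝ) (hη : 0 < η) (t : ℝ) (ht : t ∈ Set.Ico (0 : ℝ) 1) :
    ∀ g₁, memLeta η g₁ → ∀ g₂, memLeta η g₂ →
      (∫ x, |A2op t g₁ x - A2op t g₂ x|) ≤
        ((3 * η + 1) / (1 - t)) * ∫ x, |g₁ x - g₂ x| := by
  intro g₁ h₁ g₂ h₂
  have h1t : 0 < 1 - t := by linarith [ht.2]
  set c : ℝ := 1 / (1 - t) with hc
  have hc0 : 0 < c := by positivity
  have hc1 : 1 ≤ c := by rw [hc, le_div_iff₀ h1t]; linarith [ht.1]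
  have m₁ := h₁.1; have m₂ := h₂.1
  have hg₁i := h₁.integrable; have hg₂i := h₂.integrable
  have mΔ : Measurable fun x => |g₁ x - g₂ x| := (m₁.sub m₂).abs
  have hΔi : Integrable fun x => |g₁ x - g₂ x| := (hg₁i.sub hg₂i).abs
  set N := ∫ x, |g₁ x - g₂ x| with hN
  have hN0 : 0 ≤ N := integral_nonneg fun x => abs_nonneg _
  set L := ContinuousLinearMap.mul ℝ ℝ with hL
  set F₁ : ℝ → ℝ := (fun x => |g₁ x - g₂ x|) ⋆[L] g₁ with hF₁
  set F₂ : ℝ → ℝ := g₂ ⋆[L] (fun x => |g₁ x - g₂ x|) with hF₂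
  have hF₁def : ∀ x, F₁ x = ∫ x', |g₁ x' - g₂ x'| * g₁ (x - x') := fun x => by
    simp [hF₁, convolution_def, hL, ContinuousLinearMap.mul_apply']
  have hF₂def : ∀ x, F₂ x = ∫ x', g₂ x' * |g₁ (x - x') - g₂ (x - x')| := fun x => by
    simp [hF₂, convolution_def, hL, ContinuousLinearMap.mul_apply']
  have hF₁0 : ∀ x, 0 ≤ F₁ x := fun x => by
    rw [hF₁def]
    exact integral_nonneg fun x' => mul_nonneg (abs_nonneg _) (h₁.2.1 _).1
  have hF₂0 : ∀ x, 0 ≤ F₂ x := fun x => by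
    rw [hF₂def]
    exact integral_nonneg fun x' => mul_nonneg (h₂.2.1 _).1 (abs_nonneg _)
  have hF₁int : Integrable F₁ := Integrable.integrable_convolution L hΔi hg₁i
  have hF₂int : Integrable F₂ := Integrable.integrable_convolution L hg₂i hΔi
  -- integrability of the convolution integrands at fixed x
  have hui : ∀ x : ℝ, Integrable (fun x' => |g₁ x' - g₂ x'| * g₁ (x - x')) := by
    intro x
    refine Integrable.mono' hΔi
      (mΔ.mul (m₁.comp (measurable_const.sub measurable_id))).aestronglyMeasurable
      (ae_of_all _ fun x' => ?_)
    rw [Real.norm_eq_abs, abs_mul, abs_abs, abs_of_nonneg (h₁.2.1 _).1]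
    nlinarith [abs_nonneg (g₁ x' - g₂ x'), (h₁.2.1 (x - x')).2, (h₁.2.1 (x - x')).1]
  have hvi : ∀ x : ℝ, Integrable (fun x' => g₂ x' * |g₁ (x - x') - g₂ (x - x')|) := by
    intro x
    refine Integrable.mono' (hg₂i.const_mul 2)
      (m₂.mul (mΔ.comp (measurable_const.sub measurable_id))).aestronglyMeasurable
      (ae_of_all _ fun x' => ?_)
    rw [Real.norm_eq_abs, abs_mul, abs_abs, abs_of_nonneg (h₂.2.1 _).1]
    have hD : |g₁ (x - x') - g₂ (x - x')| ≤ 2 := by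
      have := (h₁.2.1 (x - x')); have := (h₂.2.1 (x - x'))
      rw [abs_le]; constructor <;> linarith [(h₁.2.1 (x - x')).1, (h₁.2.1 (x - x')).2,
        (h₂.2.1 (x - x')).1, (h₂.2.1 (x - x')).2]
    nlinarith [(h₂.2.1 x').1]
  -- key pointwise bound
  have key : ∀ x, |A2op t g₁ x - A2op t g₂ x| ≤
      (η + c) * |g₁ x - g₂ x| + c * η * (F₁ x + F₂ x) := by
    intro x
    by_cases hx : x < 0
    · simp only [A2op, if_pos hx, sub_zero, abs_zero]
      have := hF₁0 x; have := hF₂0 x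
      have h1 : (0:ℝ) ≤ (η + c) * |g₁ x - g₂ x| :=
        mul_nonneg (by linarith [hη.le, hc0.le]) (abs_nonneg _)
      have h2 : (0:ℝ) ≤ c * η * (F₁ x + F₂ x) :=
        mul_nonneg (mul_nonneg hc0.le hη.le) (by linarith)
      linarith
    · push_neg at hx
      simp only [A2op, if_neg (not_lt.2 hx), ← hc]
      have hI : (∫ x' in (0:ℝ)..x, x' * g₁ x' * g₁ (x - x'))
            - ∫ x' in (0:ℝ)..x, x' * g₂ x' * g₂ (x - x')
          = ∫ x' in (0:ℝ)..x, (x' * g₁ x' * g₁ (x - x') - x' * g₂ x' * g₂ (x - x')) :=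
        (intervalIntegral.integral_sub (h₁.intervalIntegrable_conv hη.le x 0 x)
          (h₂.intervalIntegrable_conv hη.le x 0 x)).symm
      have expand : (-(x + c) * g₁ x + c * ∫ x' in (0:ℝ)..x, x' * g₁ x' * g₁ (x - x'))
            - (-(x + c) * g₂ x + c * ∫ x' in (0:ℝ)..x, x' * g₂ x' * g₂ (x - x'))
          = (-(x + c)) * (g₁ x - g₂ x)
            + c * ((∫ x' in (0:ℝ)..x, x' * g₁ x' * g₁ (x - x'))
                - ∫ x' in (0:ℝ)..x, x' * g₂ x' * g₂ (x - x')) := by ring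
      rw [expand, hI]
      -- bound the interval integral of the difference
      have hptwise : ∀ x' ∈ Icc (0:ℝ) x,
          |x' * g₁ x' * g₁ (x - x') - x' * g₂ x' * g₂ (x - x')| ≤
          η * (|g₁ x' - g₂ x'| * g₁ (x - x') + g₂ x' * |g₁ (x - x') - g₂ (x - x')|) := by
        intro x' hx'
        have e : x' * g₁ x' * g₁ (x - x') - x' * g₂ x' * g₂ (x - x')
            = x' * (g₁ x' - g₂ x') * g₁ (x - x') + x' * g₂ x' * (g₁ (x - x') - g₂ (x - x')) := by
          ring
        rw [e]
        have h1 : x' * |g₁ x' - g₂ x'| ≤ η * |g₁ x' - g₂ x'| := by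
          rcases le_or_gt x' η with h | h
          · exact mul_le_mul_of_nonneg_right h (abs_nonneg _)
          · have e1 : g₁ x' = 0 := h₁.2.2.1 x' (fun hm => absurd hm.2 (not_le.2 h))
            have e2 : g₂ x' = 0 := h₂.2.2.1 x' (fun hm => absurd hm.2 (not_le.2 h))
            simp [e1, e2]
        have h2 : x' * g₂ x' ≤ η * g₂ x' := by
          rcases le_or_gt x' η with h | h
          · exact mul_le_mul_of_nonneg_right h (h₂.2.1 x').1
          · have e2 : g₂ x' = 0 := h₂.2.2.1 x' (fun hm => absurd hm.2 (not_le.2 h))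
            simp [e2]
        calc |x' * (g₁ x' - g₂ x') * g₁ (x - x') + x' * g₂ x' * (g₁ (x - x') - g₂ (x - x'))|
            ≤ |x' * (g₁ x' - g₂ x') * g₁ (x - x')| + |x' * g₂ x' * (g₁ (x - x') - g₂ (x - x'))| :=
              abs_add_le _ _
          _ = x' * |g₁ x' - g₂ x'| * g₁ (x - x') + x' * g₂ x' * |g₁ (x - x') - g₂ (x - x')| := by
              rw [abs_mul, abs_mul, abs_mul, abs_mul, abs_of_nonneg hx'.1,
                abs_of_nonneg (h₁.2.1 (x - x')).1, abs_of_nonneg (h₂.2.1 x').1]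
          _ ≤ η * |g₁ x' - g₂ x'| * g₁ (x - x') + η * g₂ x' * |g₁ (x - x') - g₂ (x - x')| :=
              add_le_add (mul_le_mul_of_nonneg_right h1 (h₁.2.1 (x - x')).1)
                (mul_le_mul_of_nonneg_right h2 (abs_nonneg _))
          _ = η * (|g₁ x' - g₂ x'| * g₁ (x - x') + g₂ x' * |g₁ (x - x') - g₂ (x - x')|) := by
              ring
      have IIdiff : IntervalIntegrable
          (fun x' => x' * g₁ x' * g₁ (x - x') - x' * g₂ x' * g₂ (x - x')) volume 0 x :=
        (h₁.intervalIntegrable_conv hη.le x 0 x).sub (h₂.intervalIntegrable_conv hη.le x 0 x)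
      have IIu : IntervalIntegrable (fun x' => |g₁ x' - g₂ x'| * g₁ (x - x')) volume 0 x :=
        (hui x).intervalIntegrable
      have IIv : IntervalIntegrable (fun x' => g₂ x' * |g₁ (x - x') - g₂ (x - x')|) volume 0 x :=
        (hvi x).intervalIntegrable
      have hIbound : |∫ x' in (0:ℝ)..x,
            (x' * g₁ x' * g₁ (x - x') - x' * g₂ x' * g₂ (x - x'))| ≤ η * (F₁ x + F₂ x) := by
        calc |∫ x' in (0:ℝ)..x, (x' * g₁ x' * g₁ (x - x') - x' * g₂ x' * g₂ (x - x'))|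
            ≤ ∫ x' in (0:ℝ)..x, |x' * g₁ x' * g₁ (x - x') - x' * g₂ x' * g₂ (x - x')| :=
              intervalIntegral.abs_integral_le_integral_abs hx
          _ ≤ ∫ x' in (0:ℝ)..x,
              η * (|g₁ x' - g₂ x'| * g₁ (x - x') + g₂ x' * |g₁ (x - x') - g₂ (x - x')|) := by
              refine intervalIntegral.integral_mono_on hx IIdiff.abs
                (((IIu.add IIv).const_mul η)) hptwise
          _ = η * ∫ x' in (0:ℝ)..x,
              (|g₁ x' - g₂ x'| * g₁ (x - x') + g₂ x' * |g₁ (x - x') - g₂ (x - x')|) :=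
              intervalIntegral.integral_const_mul _ _
          _ ≤ η * (F₁ x + F₂ x) := by
              refine mul_le_mul_of_nonneg_left ?_ hη.le
              rw [intervalIntegral.integral_add IIu IIv, hF₁def, hF₂def]
              have hu : (∫ x' in (0:ℝ)..x, |g₁ x' - g₂ x'| * g₁ (x - x'))
                  ≤ ∫ x', |g₁ x' - g₂ x'| * g₁ (x - x') := by
                rw [intervalIntegral.integral_of_le hx]
                exact setIntegral_le_integral (hui x)
                  (ae_of_all _ fun x' => mul_nonneg (abs_nonneg _) (h₁.2.1 _).1)
              have hv : (∫ x' in (0:ℝ)..x, g₂ x' * |g₁ (x - x') - g₂ (x - x')|)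
                  ≤ ∫ x', g₂ x' * |g₁ (x - x') - g₂ (x - x')| := by
                rw [intervalIntegral.integral_of_le hx]
                exact setIntegral_le_integral (hvi x)
                  (ae_of_all _ fun x' => mul_nonneg (h₂.2.1 _).1 (abs_nonneg _))
              linarith
      have hxη : (x + c) * |g₁ x - g₂ x| ≤ (η + c) * |g₁ x - g₂ x| := by
        rcases le_or_gt x η with h | h
        · exact mul_le_mul_of_nonneg_right (by linarith) (abs_nonneg _)
        · have e1 : g₁ x = 0 := h₁.2.2.1 x (fun hm => absurd hm.2 (not_le.2 h))
          have e2 : g₂ x = 0 := h₂.2.2.1 x (fun hm => absurd hm.2 (not_le.2 h))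
          simp [e1, e2]
      calc |(-(x + c)) * (g₁ x - g₂ x)
            + c * ∫ x' in (0:ℝ)..x, (x' * g₁ x' * g₁ (x - x') - x' * g₂ x' * g₂ (x - x'))|
          ≤ |(-(x + c)) * (g₁ x - g₂ x)|
            + |c * ∫ x' in (0:ℝ)..x, (x' * g₁ x' * g₁ (x - x') - x' * g₂ x' * g₂ (x - x'))| :=
            abs_add_le _ _
        _ = (x + c) * |g₁ x - g₂ x|
            + c * |∫ x' in (0:ℝ)..x, (x' * g₁ x' * g₁ (x - x') - x' * g₂ x' * g₂ (x - x'))| := by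
            rw [abs_mul, abs_mul, abs_neg, abs_of_nonneg (by linarith [hc0.le] : (0:ℝ) ≤ x + c),
              abs_of_nonneg hc0.le]
        _ ≤ (η + c) * |g₁ x - g₂ x| + c * (η * (F₁ x + F₂ x)) :=
            add_le_add hxη (mul_le_mul_of_nonneg_left hIbound hc0.le)
        _ = (η + c) * |g₁ x - g₂ x| + c * η * (F₁ x + F₂ x) := by ring
  -- integrate the pointwise bound
  have hsum : Integrable (fun x => F₁ x + F₂ x) := hF₁int.add hF₂int
  have hΔc : Integrable (fun x => (η + c) * |g₁ x - g₂ x|) := hΔi.const_mul _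
  have hGc : Integrable (fun x => c * η * (F₁ x + F₂ x)) := hsum.const_mul _
  have hGint : Integrable (fun x => (η + c) * |g₁ x - g₂ x| + c * η * (F₁ x + F₂ x)) :=
    hΔc.add hGc
  have main := integral_mono_of_nonneg (ae_of_all _ fun x => abs_nonneg _) hGint
    (ae_of_all _ key)
  rw [integral_add hΔc hGc, integral_const_mul, integral_const_mul,
    integral_add hF₁int hF₂int] at main
  have e₁ : ∫ x, F₁ x = N * ∫ x, g₁ x := by
    rw [hF₁, integral_convolution L hΔi hg₁i]
    simp [hL, ContinuousLinearMap.mul_apply', hN]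
  have e₂ : ∫ x, F₂ x = (∫ x, g₂ x) * N := by
    rw [hF₂, integral_convolution L hg₂i hΔi]
    simp [hL, ContinuousLinearMap.mul_apply', hN]
  rw [e₁, e₂] at main
  have ha1 : ∫ x, g₁ x ≤ 1 := h₁.integral_le_one hη.le
  have ha0 : 0 ≤ ∫ x, g₁ x := integral_nonneg fun x => (h₁.2.1 x).1
  have hb1 : ∫ x, g₂ x ≤ 1 := h₂.integral_le_one hη.le
  have hb0 : 0 ≤ ∫ x, g₂ x := integral_nonneg fun x => (h₂.2.1 x).1
  have hrhs : (3 * η + 1) / (1 - t) = (3 * η + 1) * c := by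
    rw [hc]; ring
  rw [hrhs]
  have h3 : (η + c) * N + c * η * (N * (∫ x, g₁ x) + (∫ x, g₂ x) * N)
      ≤ (3 * η + 1) * c * N := by
    nlinarith [mul_nonneg (mul_nonneg hc0.le hη.le) hN0,
      mul_nonneg (sub_nonneg.2 ha1) (mul_nonneg (mul_nonneg hc0.le hη.le) hN0),
      mul_nonneg (sub_nonneg.2 hb1) (mul_nonneg (mul_nonneg hc0.le hη.le) hN0),
      mul_nonneg (sub_nonneg.2 hc1) (mul_nonneg hη.le hN0)]
  linarith
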